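/- Let R be a commutative ring, let x, y ∈ SL₂(R), let ε ∈ {1, −1}, and set y₁ = x²·y·x^{2ε}·y⁻¹. Then for every integer k ≥ 1, tr(x² · y₁^{k}) = tr(x²) · ( Σ_{i=1}^{k} (−1)^{k−i} tr(y₁^{i}) + (−1)^{k} ). -/
import Mathlib

namespace TraceSqAux

variable {R : Type*} [CommRing R]

/-- For a 2×2 matrix, the adjugate is `tr N • 1 - N` (Cayley–Hamilton form). -/
lemma adjugate_eq (N : Matrix (Fin 2) (Fin 2) R) :
    N.adjugate = N.trace • (1 : Matrix (Fin 2) (Fin 2) R) - N := by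
  rw [Matrix.adjugate_fin_two]
  ext i j
  fin_cases i <;> fin_cases j <;> simp [Matrix.trace_fin_two, Matrix.one_apply]

/-- Trace of an element of `SL₂(R)` as a matrix. -/
def tt (A : Matrix.SpecialLinearGroup (Fin 2) R) : R :=
  Matrix.trace (A : Matrix (Fin 2) (Fin 2) R)

lemma tt_mul_comm (A B : Matrix.SpecialLinearGroup (Fin 2) R) :
    tt (A * B) = tt (B * A) := by
  simp only [tt, Matrix.SpecialLinearGroup.coe_mul]
  exact Matrix.trace_mul_comm _ _

lemma tt_inv (A : Matrix.SpecialLinearGroup (Fin 2) R) : tt A⁻¹ = tt A := by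
  have h : ((A⁻¹ : Matrix.SpecialLinearGroup (Fin 2) R) : Matrix (Fin 2) (Fin 2) R)
      = Matrix.adjugate A := rfl
  simp [tt, h, adjugate_eq, Matrix.trace_smul, Matrix.trace_one, Matrix.trace_sub]
  ring

/-- Fundamental SL₂ trace identity. -/
lemma tt_mul_add_tt_mul_inv (A B : Matrix.SpecialLinearGroup (Fin 2) R) :
    tt (A * B) + tt (A * B⁻¹) = tt A * tt B := by
  have h : ((B⁻¹ : Matrix.SpecialLinearGroup (Fin 2) R) : Matrix (Fin 2) (Fin 2) R)
      = Matrix.adjugate B := rfl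
  simp only [tt, Matrix.SpecialLinearGroup.coe_mul, h, adjugate_eq]
  rw [Matrix.mul_sub, Matrix.trace_sub, Matrix.mul_smul, Matrix.trace_smul, Matrix.mul_one]
  simp [smul_eq_mul]
  ring

lemma aux_e1 (a u : Matrix.SpecialLinearGroup (Fin 2) R) (j : ℕ) :
    tt (a * ((a * u) ^ (j + 1))⁻¹) = tt (u * (a * u) ^ j) := by
  rw [← tt_inv (a * ((a * u) ^ (j + 1))⁻¹), mul_inv_rev, inv_inv, tt_mul_comm]
  congr 1
  simp [pow_succ', mul_assoc]

lemma aux_e2 (a u : Matrix.SpecialLinearGroup (Fin 2) R) (j : ℕ) :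
    tt (u * ((a * u) ^ (j + 1))⁻¹) = tt (a * (a * u) ^ j) := by
  rw [← tt_inv (u * ((a * u) ^ (j + 1))⁻¹), mul_inv_rev, inv_inv]
  have h : (a * u) ^ (j + 1) * u⁻¹ = (a * u) ^ j * a := by
    rw [pow_succ]; simp [mul_assoc]
  rw [h, tt_mul_comm]

lemma key_P (a u : Matrix.SpecialLinearGroup (Fin 2) R) (htu : tt u = tt a) :
    ∀ j : ℕ, tt (a * (a * u) ^ j) = tt (u * (a * u) ^ j) := by
  intro j
  induction j with
  | zero => simp [htu]
  | succ j ih =>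
    have h1 := tt_mul_add_tt_mul_inv a ((a * u) ^ (j + 1))
    have h2 := tt_mul_add_tt_mul_inv u ((a * u) ^ (j + 1))
    rw [aux_e1] at h1
    rw [aux_e2] at h2
    linear_combination h1 - h2 + ih - tt ((a * u) ^ (j + 1)) * htu

lemma key_rec (a u : Matrix.SpecialLinearGroup (Fin 2) R) (htu : tt u = tt a) (k : ℕ) :
    tt (a * (a * u) ^ (k + 1)) + tt (a * (a * u) ^ k) = tt a * tt ((a * u) ^ (k + 1)) := by
  have h1 := tt_mul_add_tt_mul_inv a ((a * u) ^ (k + 1))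
  rw [aux_e1, ← key_P a u htu k] at h1
  exact h1

end TraceSqAux

/-- Positive-exponent summation formula of Lemma 2.2: for `x, y ∈ SL₂(R)`, `ε = ±1`,
`y₁ = x²·y·x^{2ε}·y⁻¹` and any integer `k ≥ 1`,
`tr(x² · y₁^k) = tr(x²)·(∑_{i=1}^{k} (-1)^{k-i} tr(y₁^i) + (-1)^k)`. -/
theorem trace_sq_mul_pow_eq_sum
    (R : Type*) [CommRing R] (x y : Matrix.SpecialLinearGroup (Fin 2) R)
    (ε : ℤ) (hε : ε = 1 ∨ ε = -1) (k : ℕ) (hk : 1 ≤ k) :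
    Matrix.trace
      ((x ^ 2 * (x ^ 2 * y * x ^ (2 * ε) * y⁻¹) ^ k :
        Matrix.SpecialLinearGroup (Fin 2) R) : Matrix (Fin 2) (Fin 2) R)
    = Matrix.trace ((x ^ 2 : Matrix.SpecialLinearGroup (Fin 2) R) : Matrix (Fin 2) (Fin 2) R)
        * (∑ i ∈ Finset.Icc 1 k, (-1 : R) ^ (k - i) *
            Matrix.trace (((x ^ 2 * y * x ^ (2 * ε) * y⁻¹) ^ i :
              Matrix.SpecialLinearGroup (Fin 2) R) : Matrix (Fin 2) (Fin 2) R)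
          + (-1 : R) ^ k) := by
  open TraceSqAux in
  set a : Matrix.SpecialLinearGroup (Fin 2) R := x ^ 2 with ha
  set u : Matrix.SpecialLinearGroup (Fin 2) R := y * x ^ (2 * ε) * y⁻¹ with hu
  have hy1 : x ^ 2 * y * x ^ (2 * ε) * y⁻¹ = a * u := by
    rw [ha, hu]; group
  have htu : tt u = tt a := by
    have hconj : tt u = tt (x ^ (2 * ε)) := by
      rw [hu, tt_mul_comm]
      have h : y⁻¹ * (y * x ^ (2 * ε)) = x ^ (2 * ε) := by group
      rw [h]
    rw [hconj]
    rcases hε with h | h <;> subst h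
    · norm_num
      congr 1
    · have h : x ^ (2 * (-1) : ℤ) = (x ^ 2)⁻¹ := by group
      rw [h, tt_inv]
  rw [hy1]
  show tt (a * (a * u) ^ k)
      = tt a * (∑ i ∈ Finset.Icc 1 k, (-1 : R) ^ (k - i) * tt ((a * u) ^ i) + (-1 : R) ^ k)
  induction k with
  | zero => omega
  | succ k ih =>
    rcases Nat.eq_or_lt_of_le hk with h1 | h1
    · -- base case k + 1 = 1
      have hk0 : k = 0 := by omega
      subst hk0
      rw [Finset.Icc_self, Finset.sum_singleton]
      have h := key_rec a u htu 0
      simp only [pow_zero, pow_one, mul_one, zero_add] at h ⊢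
      norm_num
      linear_combination h
    · have hk' : 1 ≤ k := by omega
      have ih' := ih hk'
      have hrec := key_rec a u htu k
      have hsum : ∑ i ∈ Finset.Icc 1 (k + 1), (-1 : R) ^ (k + 1 - i) * tt ((a * u) ^ i)
          = tt ((a * u) ^ (k + 1))
            - ∑ i ∈ Finset.Icc 1 k, (-1 : R) ^ (k - i) * tt ((a * u) ^ i) := by
        rw [Finset.sum_Icc_succ_top (by omega : 1 ≤ k + 1)]
        have hcong : ∀ i ∈ Finset.Icc 1 k, (-1 : R) ^ (k + 1 - i) * tt ((a * u) ^ i)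
            = -((-1 : R) ^ (k - i) * tt ((a * u) ^ i)) := by
          intro i hi
          rw [Finset.mem_Icc] at hi
          have h2 : k + 1 - i = (k - i) + 1 := by omega
          rw [h2, pow_succ]
          ring
        rw [Finset.sum_congr rfl hcong, Finset.sum_neg_distrib]
        simp only [Nat.sub_self, pow_zero, one_mul]
        ring
      rw [hsum]
      have hstep : tt (a * (a * u) ^ (k + 1))
          = tt a * tt ((a * u) ^ (k + 1)) - tt (a * (a * u) ^ k) := by
        linear_combination hrec
      rw [hstep, ih', pow_succ]
      ring
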